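/- There exists a dynamical system and a compact constraint set X not of product form for which the MPI set of the full system is empty while the MPI set of a subsystem with respect to a fixed slice of X is nonempty: for ẋ₁ = 0, ẋ₂ = −x₁x₂, ẋ₃ = x₁x₃(1−x₃) on X = {(x₁,x₂,x₃) : x₁,x₃ ∈ [1/2,1], x₂ ∈ [0,1], x₂ ≥ x₃ − 1/2}, every trajectory starting in X eventually leaves X (so M₊ = ∅), while every trajectory of the (x₁,x₂)-subsystem starting in the slice X_{1,2}(1/2) = [1/2,1]×[0,1] remains in it for all t ≥ 0. -/

import Mathlib

private lemma deriv_fst {α β : Type*} [NormedAddCommGroup α] [NormedSpace ℝ α]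
    [NormedAddCommGroup β] [NormedSpace ℝ β] {γ : ℝ → α × β} {v : α × β} {t : ℝ}
    (h : HasDerivAt γ v t) : HasDerivAt (fun s => (γ s).1) v.1 t := by
  simpa using (h.hasFDerivAt.fst).hasDerivAt

private lemma deriv_snd {α β : Type*} [NormedAddCommGroup α] [NormedSpace ℝ α]
    [NormedAddCommGroup β] [NormedSpace ℝ β] {γ : ℝ → α × β} {v : α × β} {t : ℝ}
    (h : HasDerivAt γ v t) : HasDerivAt (fun s => (γ s).2) v.2 t := by
  simpa using (h.hasFDerivAt.snd).hasDerivAt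

private lemma const_of_deriv_zero {g : ℝ → ℝ} (h : ∀ t, HasDerivAt g 0 t) (t : ℝ) :
    g t = g 0 :=
  is_const_of_deriv_eq_zero (fun s => (h s).differentiableAt)
    (fun s => (h s).deriv) t 0

/-- exponential decay solution -/
private lemma exp_sol {a : ℝ} {g : ℝ → ℝ} (h : ∀ t, HasDerivAt g (-a * g t) t) (t : ℝ) :
    g t = g 0 * Real.exp (-(a * t)) := by
  have key : ∀ s, g s * Real.exp (a * s) = g 0 := by
    intro s
    have h' : ∀ u, HasDerivAt (fun w => g w * Real.exp (a * w)) 0 u := by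
      intro u
      have he : HasDerivAt (fun w => Real.exp (a * w)) (a * Real.exp (a * u)) u := by
        simpa [mul_comm, Function.comp_def] using (Real.hasDerivAt_exp (a * u)).comp u
          ((hasDerivAt_id u).const_mul a)
      have := (h u).fun_mul he
      refine this.congr_deriv ?_
      ring
    simpa using const_of_deriv_zero h' s
  have := key t
  have hne : Real.exp (a * t) ≠ 0 := (Real.exp_pos _).ne'
  field_simp [Real.exp_neg] at this ⊢
  rw [Real.exp_neg, ← this, mul_inv_cancel_right₀ hne]

theorem nonproduct_MPI_counterexample :
    (∀ x ∈ {p : ℝ × ℝ × ℝ | p.1 ∈ Set.Icc (1/2 : ℝ) 1 ∧ p.2.2 ∈ Set.Icc (1/2 : ℝ) 1 ∧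
        p.2.1 ∈ Set.Icc (0 : ℝ) 1 ∧ p.2.1 ≥ p.2.2 - 1/2},
      ∀ γ : ℝ → ℝ × ℝ × ℝ, γ 0 = x →
        (∀ t : ℝ, HasDerivAt γ
          (0, -(γ t).1 * (γ t).2.1, (γ t).1 * (γ t).2.2 * (1 - (γ t).2.2)) t) →
        ∃ t ≥ (0 : ℝ), γ t ∉ {p : ℝ × ℝ × ℝ | p.1 ∈ Set.Icc (1/2 : ℝ) 1 ∧
          p.2.2 ∈ Set.Icc (1/2 : ℝ) 1 ∧ p.2.1 ∈ Set.Icc (0 : ℝ) 1 ∧ p.2.1 ≥ p.2.2 - 1/2}) ∧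
    (∀ p ∈ Set.Icc (1/2 : ℝ) 1 ×ˢ Set.Icc (0 : ℝ) 1,
      ∀ γ : ℝ → ℝ × ℝ, γ 0 = p →
        (∀ t : ℝ, HasDerivAt γ (0, -(γ t).1 * (γ t).2) t) →
        ∀ t ≥ (0 : ℝ), γ t ∈ Set.Icc (1/2 : ℝ) 1 ×ˢ Set.Icc (0 : ℝ) 1) := by
  constructor
  · rintro x ⟨hx1, hx3, hx2, hx23⟩ γ hγ0 hγ'
    by_contra hcon
    push_neg at hcon
    -- hcon : ∀ t ≥ 0, γ t ∈ X
    set a := x.1 with ha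
    -- first component constant
    have h1 : ∀ t, (γ t).1 = a := by
      intro t
      have : ∀ s, HasDerivAt (fun w => (γ w).1) 0 s := fun s => deriv_fst (hγ' s)
      rw [const_of_deriv_zero this t, hγ0]
    have ha1 : 1/2 ≤ a := hx1.1
    have ha2 : a ≤ 1 := hx1.2
    -- second component
    have h2 : ∀ t, (γ t).2.1 = x.2.1 * Real.exp (-(a * t)) := by
      intro t
      have hs : ∀ s, HasDerivAt (fun w => (γ w).2.1) (-a * (γ s).2.1) s := by
        intro s
        have := deriv_fst (deriv_snd (hγ' s))
        simpa [h1 s] using this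
      have := exp_sol hs t
      rw [this, hγ0]
    -- bound on x₂ for t ≥ 10
    have hx2bd : ∀ t ≥ (10:ℝ), (γ t).2.1 ≤ 1/10 := by
      intro t ht
      rw [h2 t]
      have h1' : x.2.1 * Real.exp (-(a * t)) ≤ Real.exp (-(a * t)) := by
        nlinarith [Real.exp_pos (-(a*t)), hx2.1, hx2.2]
      have h2' : Real.exp (-(a * t)) ≤ Real.exp (-5) := by
        apply Real.exp_le_exp.2
        nlinarith
      have h3' : Real.exp (-5 : ℝ) ≤ 1/10 := by
        rw [Real.exp_neg, inv_le_comm₀ (Real.exp_pos _) (by norm_num)]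
        have : Real.exp (5:ℝ) = Real.exp 1 ^ (5:ℕ) := by
          rw [← Real.exp_nat_mul]; norm_num
        rw [this]
        have h := Real.exp_one_gt_d9
        have h2 : (2:ℝ)^5 ≤ Real.exp 1 ^ 5 :=
          pow_le_pow_left₀ (by norm_num) (by linarith) 5
        norm_num at h2 ⊢
        linarith
      linarith
    -- third component: for t ∈ interior [10,20], derivative ≥ 1/10
    have h3d : ∀ s, HasDerivAt (fun w => (γ w).2.2)
        ((γ s).1 * (γ s).2.2 * (1 - (γ s).2.2)) s :=
      fun s => deriv_snd (deriv_snd (hγ' s))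
    have hmem : ∀ t ≥ (0:ℝ), (γ t).2.2 ∈ Set.Icc (1/2:ℝ) 1 ∧ (γ t).2.1 ≥ (γ t).2.2 - 1/2 := by
      intro t ht
      obtain ⟨_, hb, _, hd⟩ := hcon t ht
      exact ⟨hb, hd⟩
    -- g := x₃ - t/10 is monotone on [10,20]
    set g : ℝ → ℝ := fun w => (γ w).2.2 - w/10 with hg
    have hgd : ∀ s, HasDerivAt g ((γ s).1 * (γ s).2.2 * (1 - (γ s).2.2) - 1/10) s := by
      intro s
      exact (h3d s).sub ((hasDerivAt_id s).div_const 10)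
    have hmono : MonotoneOn g (Set.Icc (10:ℝ) 20) := by
      apply monotoneOn_of_deriv_nonneg (convex_Icc _ _)
      · exact fun s _ => ((hgd s).continuousAt).continuousWithinAt
      · exact fun s _ => ((hgd s).differentiableAt).differentiableWithinAt
      · intro s hs
        rw [interior_Icc] at hs
        rw [(hgd s).deriv]
        have hs10 : (10:ℝ) ≤ s := le_of_lt hs.1
        have hs0 : (0:ℝ) ≤ s := by linarith
        obtain ⟨⟨hbl, hbu⟩, hd⟩ := hmem s hs0
        have h2b := hx2bd s hs10
        have hub : (γ s).2.2 ≤ 3/5 := by linarith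
        rw [h1 s]
        have hq : (γ s).2.2 * (1 - (γ s).2.2) ≥ 6/25 := by
          nlinarith [mul_nonneg (by linarith : (0:ℝ) ≤ (γ s).2.2 - 1/2)
            (by linarith : (0:ℝ) ≤ 3/5 - (γ s).2.2)]
        nlinarith [mul_nonneg (by linarith : (0:ℝ) ≤ a - 1/2)
          (by linarith : (0:ℝ) ≤ (γ s).2.2 * (1 - (γ s).2.2))]
    have h10 : g 10 ≤ g 20 := hmono (by norm_num) (by norm_num) (by norm_num)
    have hA := hmem 10 (by norm_num)
    have hB := hmem 20 (by norm_num)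
    have : (γ 20).2.2 ≥ (γ 10).2.2 + 1 := by
      simp only [hg] at h10
      linarith
    have := hA.1.1
    have := hB.1.2
    linarith
  · rintro p ⟨hp1, hp2⟩ γ hγ0 hγ' t ht
    have h1 : ∀ s, (γ s).1 = p.1 := by
      intro s
      have : ∀ u, HasDerivAt (fun w => (γ w).1) 0 u := fun u => deriv_fst (hγ' u)
      rw [const_of_deriv_zero this s, hγ0]
    have h2 : ∀ s, (γ s).2 = p.2 * Real.exp (-(p.1 * s)) := by
      intro s
      have hs : ∀ u, HasDerivAt (fun w => (γ w).2) (-p.1 * (γ u).2) u := by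
        intro u
        have := deriv_snd (hγ' u)
        simpa [h1 u] using this
      have := exp_sol hs s
      rw [this, hγ0]
    constructor
    · rw [h1 t]; exact hp1
    · rw [h2 t]
      have he1 : Real.exp (-(p.1 * t)) ≤ 1 := by
        apply Real.exp_le_one_iff.mpr  -- maybe wrong name
        nlinarith [hp1.1]
      have he0 := Real.exp_pos (-(p.1 * t))
      constructor
      · nlinarith [hp2.1]
      · nlinarith [hp2.1, hp2.2]
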